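/- Let X and Y be nonempty compact metric spaces and let I : X → ℓ² and J : Y → ℓ² be continuous maps into the Hilbert space ℓ² of square-summable real sequences, and let ε > 0. (a) If the image I(X) is contained in the open ε-neighbourhood of J(Y), then there exists a map f : X → Y with ‖I(x) − J(f(x))‖ < 5ε for all x ∈ X. (b) If the Hausdorff distance between I(X) and J(Y) in ℓ² is strictly less than ε, then there exists a map f : X → Y such that ‖I(x) − J(f(x))‖ < 5ε for all x ∈ X and, in addition, for every y ∈ Y there exists x ∈ X with ‖J(f(x)) − J(y)‖ < 5ε. -/

import Mathlib

open Filter Set Metric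


/-- Closeness of the images of `I` and `J` yields spectral (weak) approximations. -/
theorem hausdorff_to_spectral_approx
    {X Y : Type*} [MetricSpace X] [CompactSpace X] [Nonempty X]
    [MetricSpace Y] [CompactSpace Y] [Nonempty Y]
    (I : X → lp (fun _ : ℕ => ℝ) 2) (J : Y → lp (fun _ : ℕ => ℝ) 2)
    (hI : Continuous I) (hJ : Continuous J)
    (ε : ℝ) (hε : 0 < ε) :
    ((Set.range I ⊆ Metric.thickening ε (Set.range J)) →
      ∃ f : X → Y, ∀ x : X, ‖I x - J (f x)‖ < 5 * ε) ∧
    ((Metric.hausdorffDist (Set.range I) (Set.range J) < ε) →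
      ∃ f : X → Y, (∀ x : X, ‖I x - J (f x)‖ < 5 * ε) ∧
        ∀ y : Y, ∃ x : X, ‖J (f x) - J y‖ < 5 * ε) := by
  constructor
  · intro h
    have hx : ∀ x : X, ∃ y : Y, ‖I x - J y‖ < 5 * ε := by
      intro x
      have := h (mem_range_self x)
      rw [Metric.mem_thickening_iff] at this
      obtain ⟨z, ⟨y, rfl⟩, hz⟩ := this
      exact ⟨y, by rw [← dist_eq_norm]; nlinarith⟩
    choose f hf using hx
    exact ⟨f, hf⟩
  · intro h
    have hfin : EMetric.hausdorffEdist (Set.range I) (Set.range J) ≠ ⊤ := by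
      apply Metric.hausdorffEdist_ne_top_of_nonempty_of_bounded
        (range_nonempty I) (range_nonempty J)
      · exact (isCompact_range hI).isBounded
      · exact (isCompact_range hJ).isBounded
    have hx : ∀ x : X, ∃ y : Y, dist (I x) (J y) < ε := by
      intro x
      obtain ⟨z, ⟨y, rfl⟩, hz⟩ :=
        Metric.exists_dist_lt_of_hausdorffDist_lt (mem_range_self x) h hfin
      exact ⟨y, hz⟩
    choose f hf using hx
    refine ⟨f, fun x => by rw [← dist_eq_norm]; nlinarith [hf x], fun y => ?_⟩
    obtain ⟨z, ⟨x, rfl⟩, hz⟩ :=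
      Metric.exists_dist_lt_of_hausdorffDist_lt' (mem_range_self y) h hfin
    refine ⟨x, ?_⟩
    have h1 := hf x
    have h2 := hz
    have := dist_triangle (J (f x)) (I x) (J y)
    rw [dist_eq_norm] at h1 h2 this
    calc ‖J (f x) - J y‖ ≤ ‖J (f x) - I x‖ + ‖I x - J y‖ := by simpa only [dist_eq_norm] using this
      _ < 5 * ε := by rw [norm_sub_rev] at h1; nlinarith
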